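/- arXiv:1905.13502 — 2 statements merged into one kernel-verified Lean document; each statement's English description precedes it below -/
import Mathlib

section
/- Fix a ∈ ℝ∖{0} and set Y_a = {v ∈ ℝⁿ : q(v) ∈ a·(ℝ∖{0})²} (equivalently, q(v)/a > 0). Then for every continuous compactly supported f : ℝⁿ → ℂ with support contained in Y_a, the function b ↦ |b|^{n−1}·(∫ f(b·x) dμ_a(x)) is integrable on ℝ∖{0} and ∫_{ℝⁿ} f(v) dv = (1/2)·|2a|·∫_{ℝ∖{0}} (∫ f(b·x) dμ_a(x))·|b|^{n−1} db. (This is the integral identity of Lemma 6.4 of the paper, in the archimedean case F = ℝ; here |b|^{n−1} db = |b|ⁿ · db/|b|.) -/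
open MeasureTheory
open scoped ContDiff

private lemma qcont_aux (n : ℕ) (q : QuadraticForm ℝ (Fin n → ℝ)) : Continuous q := by
  classical
  let B := QuadraticMap.associated (R := ℝ) q
  have hq : ∀ v, q v = B v v := fun v => (QuadraticMap.associated_eq_self_apply ℝ q v).symm
  let C : (Fin n → ℝ) →ₗ[ℝ] ((Fin n → ℝ) →L[ℝ] ℝ) :=
    (LinearMap.toContinuousLinearMap :
      ((Fin n → ℝ) →ₗ[ℝ] ℝ) ≃ₗ[ℝ] ((Fin n → ℝ) →L[ℝ] ℝ)).toLinearMap.comp B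
  have hC : Continuous C := C.continuous_of_finiteDimensional
  have h2 : Continuous fun v : Fin n → ℝ => (C v) v :=
    isBoundedBilinearMap_apply.continuous.comp (hC.prodMk continuous_id)
  have heq : ⇑q = fun v => (C v) v := by
    funext v
    simp [C, hq v]
  rw [heq]
  exact h2

private lemma ext_aux {F : ℝ → ℂ} (hF : ContinuousOn F {s : ℝ | s ≠ 0})
    {K : Set ℝ} (hK : IsCompact K) (h0 : (0:ℝ) ∉ K)
    (hvan : ∀ s : ℝ, s ≠ 0 → s ∉ K → F s = 0) :
    Continuous (fun s : ℝ => if s = 0 then 0 else F s) ∧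
      HasCompactSupport (fun s : ℝ => if s = 0 then 0 else F s) := by
  constructor
  · rw [continuous_iff_continuousAt]
    intro s
    by_cases hs : s = 0
    · subst hs
      have hmem : Kᶜ ∈ nhds (0:ℝ) := hK.isClosed.isOpen_compl.mem_nhds h0
      have hev : (fun s : ℝ => if s = 0 then 0 else F s) =ᶠ[nhds (0:ℝ)] fun _ => (0:ℂ) := by
        filter_upwards [hmem] with x hx
        by_cases hx0 : x = 0
        · simp [hx0]
        · simp [hx0, hvan x hx0 hx]
      exact continuousAt_const.congr hev.symm
    · have h1 : ContinuousAt F s := hF.continuousAt (isOpen_ne.mem_nhds hs)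
      apply h1.congr
      filter_upwards [isOpen_ne.mem_nhds hs] with x hx
      simp [hx]
  · apply HasCompactSupport.intro hK
    intro x hx
    by_cases hx0 : x = 0
    · simp [hx0]
    · simp [hx0, hvan x hx0 hx]

private lemma key_aux (n : ℕ) (q : QuadraticForm ℝ (Fin n → ℝ))
    (μ : ℝ → Measure (Fin n → ℝ))
    (hsupp : ∀ a : ℝ, a ≠ 0 → μ a {v : Fin n → ℝ | q v ≠ a} = 0)
    (hcont : ∀ f : (Fin n → ℝ) → ℂ, Continuous f → HasCompactSupport f →
      (∀ v ∈ tsupport f, q v ≠ 0) →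
      ContinuousOn (fun a : ℝ => ∫ v, f v ∂ μ a) {a : ℝ | a ≠ 0} ∧
      ∃ K : Set ℝ, IsCompact K ∧ (0 : ℝ) ∉ K ∧
        ∀ a : ℝ, a ≠ 0 → a ∉ K → (∫ v, f v ∂ μ a) = 0)
    (hGL : ∀ f : (Fin n → ℝ) → ℂ, Continuous f → HasCompactSupport f →
      (∀ v ∈ tsupport f, q v ≠ 0) →
      (∫ v, f v) = ∫ a in {a : ℝ | a ≠ 0}, (∫ v, f v ∂ μ a))
    (f : (Fin n → ℝ) → ℂ) (hf : Continuous f) (hfc : HasCompactSupport f)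
    (hf0 : ∀ v ∈ tsupport f, q v ≠ 0)
    (t c : ℝ) (ht : t ≠ 0) (hc : c ≠ 0) :
    (t^2 : ℝ) • (∫ v, f v ∂ μ (t^2 * c)) = (|t|^n : ℝ) • ∫ x, f (t • x) ∂ μ c := by
  classical
  have hqc : Continuous q := qcont_aux n q
  have ht2 : (t^2 : ℝ) ≠ 0 := pow_ne_zero 2 ht
  have ht2pos : (0:ℝ) < t^2 := by positivity
  -- the rescaled test function
  set g : (Fin n → ℝ) → ℂ := fun x => f (t • x) with hg_def
  have hgcont : Continuous g := hf.comp (continuous_const_smul t)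
  have hgcs : HasCompactSupport g := hfc.comp_smul ht
  have hgsub : tsupport g ⊆ (fun x : Fin n → ℝ => t • x) ⁻¹' (tsupport f) := by
    apply closure_minimal _ (IsClosed.preimage (continuous_const_smul t) isClosed_closure)
    intro x hx
    exact subset_closure hx
  have hgsupp : ∀ v ∈ tsupport g, q v ≠ 0 := by
    intro v hv hqv
    have hmem : t • v ∈ tsupport f := hgsub hv
    exact hf0 _ hmem (by rw [QuadraticMap.map_smul]; simp [hqv])
  obtain ⟨hFcont, KF, hKF, hKF0, hKFvan⟩ := hcont f hf hfc hf0
  obtain ⟨hGcont, KG, hKG, hKG0, hKGvan⟩ := hcont g hgcont hgcs hgsupp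
  set F : ℝ → ℂ := fun s => ∫ v, f v ∂ μ s with hF_def
  set G : ℝ → ℂ := fun s => ∫ v, g v ∂ μ s with hG_def
  set Fe : ℝ → ℂ := fun s => if s = 0 then 0 else F s with hFe_def
  set Ge : ℝ → ℂ := fun s => if s = 0 then 0 else G s with hGe_def
  obtain ⟨hFeC, hFeCS⟩ := ext_aux hFcont hKF hKF0 hKFvan
  obtain ⟨hGeC, hGeCS⟩ := ext_aux hGcont hKG hKG0 hKGvan
  have hFe_eq : ∀ s : ℝ, s ≠ 0 → Fe s = F s := fun s hs => if_neg hs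
  have hGe_eq : ∀ s : ℝ, s ≠ 0 → Ge s = G s := fun s hs => if_neg hs
  set D : ℝ → ℂ := fun s => (t^2 : ℝ) • Fe (t^2 * s) - (|t|^n : ℝ) • Ge s with hD_def
  have hFe2C : Continuous fun s : ℝ => Fe (t^2 * s) :=
    hFeC.comp (continuous_const.mul continuous_id)
  have hFe2CS : HasCompactSupport fun s : ℝ => Fe (t^2 * s) := by
    have h := hFeCS.comp_smul (c := t^2) ht2
    simpa only [smul_eq_mul] using h
  have hDc : Continuous D := by
    have h := ((hFe2C.const_smul (t^2 : ℝ))).sub (hGeC.const_smul (|t|^n : ℝ))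
    exact h
  have hDcs : HasCompactSupport D := by
    apply HasCompactSupport.intro (hFe2CS.union hGeCS)
    intro x hx
    simp only [Set.mem_union, not_or] at hx
    have h1 := image_eq_zero_of_notMem_tsupport hx.1
    have h2 : Ge x = 0 := image_eq_zero_of_notMem_tsupport hx.2
    simp only [D, h1, h2, smul_zero, sub_zero, zero_sub, neg_zero]
  -- the set of nonzero reals has full measure
  have hres : (volume : Measure ℝ).restrict {s : ℝ | s ≠ 0} = volume := by
    have h1 : {s : ℝ | s ≠ 0} = ({0} : Set ℝ)ᶜ := rfl
    rw [h1, Measure.restrict_congr_set (ae_eq_univ.2 (by simp)), Measure.restrict_univ]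
  have hsetm : MeasurableSet {s : ℝ | s ≠ 0} := (measurableSet_singleton (0:ℝ)).compl
  have hmain : ∀ χ : ℝ → ℝ, ContDiff ℝ ∞ χ → HasCompactSupport χ →
      ∫ s : ℝ, χ s • D s = 0 := by
    intro χ hχ hχs
    set ψ : ℝ → ℝ := fun s => χ (s / t^2) with hψ_def
    have hψcont : Continuous ψ := hχ.continuous.comp (continuous_id.div_const _)
    have hψeq : ∀ s : ℝ, ψ (t^2 * s) = χ s := by
      intro s
      simp only [ψ]
      rw [mul_div_cancel_left₀ _ ht2]
    set Φ : (Fin n → ℝ) → ℂ := fun v => ψ (q v) • f v with hΦ_def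
    have hΦc : Continuous Φ := (hψcont.comp hqc).smul hf
    have hΦsub : tsupport Φ ⊆ tsupport f := by
      apply closure_mono
      intro v hv
      simp only [Function.mem_support] at hv ⊢
      intro h
      exact hv (by simp [Φ, h])
    have hΦcs : HasCompactSupport Φ :=
      IsCompact.of_isClosed_subset hfc isClosed_closure hΦsub
    have hΦ0 : ∀ v ∈ tsupport Φ, q v ≠ 0 := fun v hv => hf0 v (hΦsub hv)
    set Φt : (Fin n → ℝ) → ℂ := fun v => Φ (t • v) with hΦt_def
    have hΦtc : Continuous Φt := hΦc.comp (continuous_const_smul t)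
    have hΦtcs : HasCompactSupport Φt := hΦcs.comp_smul ht
    have hΦtsub : tsupport Φt ⊆ (fun x : Fin n → ℝ => t • x) ⁻¹' tsupport Φ :=
      closure_minimal (fun x hx => subset_closure hx)
        (IsClosed.preimage (continuous_const_smul t) isClosed_closure)
    have hΦt0 : ∀ v ∈ tsupport Φt, q v ≠ 0 := by
      intro v hv hqv
      exact hΦ0 _ (hΦtsub hv) (by rw [QuadraticMap.map_smul]; simp [hqv])
    have hae : ∀ s : ℝ, s ≠ 0 → ∀ᵐ v ∂ μ s, q v = s := by
      intro s hs
      rw [MeasureTheory.ae_iff]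
      simpa using hsupp s hs
    have key1 : ∀ s : ℝ, s ≠ 0 → (∫ v, Φ v ∂ μ s) = (ψ s) • F s := by
      intro s hs
      have h1 : ∀ᵐ v ∂ μ s, Φ v = ψ s • f v := (hae s hs).mono (fun v hv => by simp [Φ, hv])
      rw [integral_congr_ae h1, integral_smul]
    have key2 : ∀ s : ℝ, s ≠ 0 → (∫ v, Φt v ∂ μ s) = (ψ (t^2 * s)) • G s := by
      intro s hs
      have h1 : ∀ᵐ v ∂ μ s, Φt v = ψ (t^2 * s) • g v := by
        refine (hae s hs).mono (fun v hv => ?_)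
        simp only [Φt, Φ, g]
        rw [QuadraticMap.map_smul, hv, smul_eq_mul, ← pow_two]
      rw [integral_congr_ae h1, integral_smul]
    have e1 : ∫ v, Φ v = ∫ s : ℝ, ψ s • Fe s := by
      rw [hGL Φ hΦc hΦcs hΦ0]
      have h2 : ∫ s in {s : ℝ | s ≠ 0}, (∫ v, Φ v ∂ μ s)
          = ∫ s in {s : ℝ | s ≠ 0}, ψ s • Fe s := by
        apply setIntegral_congr_fun hsetm
        intro s hs
        show (∫ v, Φ v ∂ μ s) = ψ s • Fe s
        rw [key1 s hs, hFe_eq s hs]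
      rw [h2, hres]
    have e2 : ∫ v, Φt v = ∫ s : ℝ, ψ (t^2 * s) • Ge s := by
      rw [hGL Φt hΦtc hΦtcs hΦt0]
      have h2 : ∫ s in {s : ℝ | s ≠ 0}, (∫ v, Φt v ∂ μ s)
          = ∫ s in {s : ℝ | s ≠ 0}, ψ (t^2 * s) • Ge s := by
        apply setIntegral_congr_fun hsetm
        intro s hs
        show (∫ v, Φt v ∂ μ s) = ψ (t^2 * s) • Ge s
        rw [key2 s hs, hGe_eq s hs]
      rw [h2, hres]
    have e3 : ∫ v, Φ v = (|t|^n : ℝ) • ∫ v, Φt v := by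
      have h := MeasureTheory.Measure.integral_comp_smul (volume : Measure (Fin n → ℝ)) Φ t
      rw [Module.finrank_fin_fun] at h
      have h' : (∫ v, Φt v) = |((t^n)⁻¹ : ℝ)| • ∫ v, Φ v := h
      have habs : |((t^n)⁻¹ : ℝ)| = (|t|^n)⁻¹ := by rw [abs_inv, abs_pow]
      rw [h', habs, smul_smul, mul_inv_cancel₀ (pow_ne_zero n (abs_ne_zero.2 ht)), one_smul]
    have e4 : ∫ s : ℝ, ψ s • Fe s = (t^2 : ℝ) • ∫ s : ℝ, ψ (t^2 * s) • Fe (t^2 * s) := by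
      have h := MeasureTheory.Measure.integral_comp_mul_left (fun s : ℝ => ψ s • Fe s) (t^2)
      rw [h, abs_of_pos (inv_pos.2 ht2pos), smul_smul, mul_inv_cancel₀ ht2, one_smul]
    have hIF : Integrable (fun s : ℝ => χ s • ((t^2:ℝ) • Fe (t^2 * s))) := by
      apply Continuous.integrable_of_hasCompactSupport
      · exact hχ.continuous.smul (hFe2C.const_smul (t^2:ℝ))
      · exact hχs.smul_right
    have hIG : Integrable (fun s : ℝ => χ s • ((|t|^n:ℝ) • Ge s)) := by
      apply Continuous.integrable_of_hasCompactSupport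
      · exact hχ.continuous.smul (hGeC.const_smul (|t|^n:ℝ))
      · exact hχs.smul_right
    have e5 : ∫ s : ℝ, χ s • D s
        = (∫ s : ℝ, χ s • ((t^2:ℝ) • Fe (t^2 * s))) - ∫ s : ℝ, χ s • ((|t|^n:ℝ) • Ge s) := by
      rw [← integral_sub hIF hIG]
      congr 1
      funext s
      simp [D, smul_sub]
    have e6 : ∫ s : ℝ, χ s • ((t^2:ℝ) • Fe (t^2 * s))
        = (t^2:ℝ) • ∫ s : ℝ, ψ (t^2 * s) • Fe (t^2 * s) := by
      rw [← integral_smul]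
      congr 1
      funext s
      rw [smul_comm, hψeq]
    have e7 : ∫ s : ℝ, χ s • ((|t|^n:ℝ) • Ge s)
        = (|t|^n:ℝ) • ∫ s : ℝ, ψ (t^2 * s) • Ge s := by
      rw [← integral_smul]
      congr 1
      funext s
      rw [smul_comm, hψeq]
    rw [e5, e6, e7, ← e4, ← e1, ← e2, e3, sub_self]
  have hloc : LocallyIntegrable D volume :=
    (hDc.integrable_of_hasCompactSupport hDcs).locallyIntegrable
  have haeD := ae_eq_zero_of_integral_contDiff_smul_eq_zero hloc hmain
  have hDeq : D = (fun _ : ℝ => (0:ℂ)) := (hDc.ae_eq_iff_eq volume continuous_const).1 haeD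
  have hDc0 : D c = 0 := congrFun hDeq c
  simp only [D] at hDc0
  rw [hFe_eq _ (mul_ne_zero ht2 hc), hGe_eq _ hc] at hDc0
  exact sub_eq_zero.mp hDc0


/-- integral identity of Lemma 6.4 of the paper, case `F = ℝ`: for
`a ≠ 0` and `f` continuous, compactly supported with support in
`Y_a = {v : q v ∈ a·(ℝ∖{0})²}`, the function `b ↦ |b|^{n-1} · ∫ f(b•x) dμ_a(x)` is
integrable on `ℝ∖{0}` and
`∫ f dv = (1/2)·|2a| · ∫_{b ≠ 0} (∫ f(b•x) dμ_a(x)) |b|^{n-1} db`. -/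
theorem stmt2 (n : ℕ) (hn : 1 ≤ n)
    (q : QuadraticForm ℝ (Fin n → ℝ))
    (hq : ∀ v : Fin n → ℝ, (∀ w : Fin n → ℝ, q (v + w) - q v - q w = 0) → v = 0)
    (μ : ℝ → Measure (Fin n → ℝ))
    (hreg : ∀ a : ℝ, a ≠ 0 → (μ a).Regular)
    (hsupp : ∀ a : ℝ, a ≠ 0 → μ a {v : Fin n → ℝ | q v ≠ a} = 0)
    (hcont : ∀ f : (Fin n → ℝ) → ℂ, Continuous f → HasCompactSupport f →
      (∀ v ∈ tsupport f, q v ≠ 0) →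
      ContinuousOn (fun a : ℝ => ∫ v, f v ∂ μ a) {a : ℝ | a ≠ 0} ∧
      ∃ K : Set ℝ, IsCompact K ∧ (0 : ℝ) ∉ K ∧
        ∀ a : ℝ, a ≠ 0 → a ∉ K → (∫ v, f v ∂ μ a) = 0)
    (hGL : ∀ f : (Fin n → ℝ) → ℂ, Continuous f → HasCompactSupport f →
      (∀ v ∈ tsupport f, q v ≠ 0) →
      (∫ v, f v) = ∫ a in {a : ℝ | a ≠ 0}, (∫ v, f v ∂ μ a))
    (a : ℝ) (ha : a ≠ 0)
    (f : (Fin n → ℝ) → ℂ) (hf : Continuous f) (hfc : HasCompactSupport f)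
    (hfY : tsupport f ⊆ {v : Fin n → ℝ | ∃ b : ℝ, b ≠ 0 ∧ q v = a * b ^ 2}) :
    IntegrableOn (fun b : ℝ => |b| ^ (n - 1) • ∫ x, f (b • x) ∂ μ a)
      {b : ℝ | b ≠ 0} volume ∧
    (∫ v, f v)
      = (1 / 2 * |2 * a|) •
          ∫ b in {b : ℝ | b ≠ 0}, |b| ^ (n - 1) • (∫ x, f (b • x) ∂ μ a) := by
  classical
  have hfq : ∀ v ∈ tsupport f, q v ≠ 0 := by
    intro v hv
    obtain ⟨b, hb, hqv⟩ := hfY hv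
    rw [hqv]
    exact mul_ne_zero ha (pow_ne_zero _ hb)
  obtain ⟨hFcont, K, hKc, hK0, hKvan⟩ := hcont f hf hfc hfq
  set F : ℝ → ℂ := fun s => ∫ v, f v ∂ μ s with hF_def
  set Fe : ℝ → ℂ := fun s => if s = 0 then 0 else F s with hFe_def
  obtain ⟨hFeC, hFeCS⟩ := ext_aux hFcont hKc hK0 hKvan
  have hFe_eq : ∀ s : ℝ, s ≠ 0 → Fe s = F s := fun s hs => if_neg hs
  have hapos : (0:ℝ) < |a| := abs_pos.2 ha
  -- F vanishes where a * s is not positive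
  have hvanish : ∀ s : ℝ, s ≠ 0 → ¬ (0 < a * s) → F s = 0 := by
    intro s hs hneg
    have hae : ∀ᵐ v ∂ μ s, q v = s := by
      rw [MeasureTheory.ae_iff]
      simpa using hsupp s hs
    have hzero : ∀ᵐ v ∂ μ s, f v = (0:ℂ) := by
      refine hae.mono (fun v hv => ?_)
      by_contra h0
      have hvmem : v ∈ tsupport f := subset_closure h0
      obtain ⟨b, hb, hqv⟩ := hfY hvmem
      apply hneg
      rw [← hv, hqv, show a * (a * b^2) = (a*b)^2 from by ring]
      have : a * b ≠ 0 := mul_ne_zero ha hb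
      positivity
    exact integral_eq_zero_of_ae hzero
  -- the key scaling identity
  have hkey : ∀ b : ℝ, b ≠ 0 →
      (b^2 : ℝ) • F (b^2 * a) = (|b|^n : ℝ) • ∫ x, f (b • x) ∂ μ a :=
    fun b hb => key_aux n q μ hsupp hcont hGL f hf hfc hfq b a hb ha
  -- the function W
  set W : ℝ → ℂ := fun b => |b| • Fe (a * b^2) with hW_def
  have hWc : Continuous W :=
    continuous_abs.smul (hFeC.comp (continuous_const.mul (continuous_pow 2)))
  have hWcs : HasCompactSupport W := by
    obtain ⟨R, hR⟩ := (hFeCS.isBounded).subset_closedBall (0:ℝ)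
    set R' : ℝ := max R 0 with hR'_def
    have hR'0 : 0 ≤ R' := le_max_right _ _
    set M : ℝ := Real.sqrt (R' / |a|) with hM_def
    apply HasCompactSupport.intro (isCompact_Icc (a := -M) (b := M))
    intro x hx
    have hnot : a * x^2 ∉ tsupport Fe := by
      intro hmem
      have h2 : |a| * x^2 ≤ R' :=
        le_trans (by simpa [Real.norm_eq_abs, abs_mul, abs_pow, sq_abs] using hR hmem)
          (le_max_left _ _)
      have h3 : x^2 ≤ R' / |a| := (le_div_iff₀ hapos).2 (by linarith [h2])
      have h4 : |x| ≤ M := by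
        rw [hM_def, ← Real.sqrt_sq_eq_abs]
        exact Real.sqrt_le_sqrt h3
      exact hx (Set.mem_Icc.2 (abs_le.1 h4))
    simp only [W]
    rw [image_eq_zero_of_notMem_tsupport hnot, smul_zero]
  have hWint : Integrable W := hWc.integrable_of_hasCompactSupport hWcs
  have hsetm : MeasurableSet {b : ℝ | b ≠ 0} := (measurableSet_singleton (0:ℝ)).compl
  -- the goal integrand coincides with W away from 0
  have hWeq : ∀ b : ℝ, b ≠ 0 →
      (|b| ^ (n-1) • ∫ x, f (b • x) ∂ μ a) = W b := by
    intro b hb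
    have hbn : (|b|^n : ℝ) ≠ 0 := pow_ne_zero _ (abs_ne_zero.2 hb)
    have h2 : (∫ x, f (b • x) ∂ μ a) = ((|b|^n)⁻¹ * b^2) • F (b^2 * a) := by
      rw [mul_smul, hkey b hb, smul_smul, inv_mul_cancel₀ hbn, one_smul]
    simp only [W]
    rw [h2, smul_smul, hFe_eq _ (mul_ne_zero ha (pow_ne_zero _ hb)),
      show a * b^2 = b^2 * a from mul_comm _ _]
    congr 1
    have hb2 : (b:ℝ)^2 = |b|^2 := (sq_abs b).symm
    rw [hb2, show |b|^(n-1) * ((|b|^n)⁻¹ * |b|^2) = |b|^(n-1) * |b|^2 * (|b|^n)⁻¹ from by ring,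
      ← pow_add, show n - 1 + 2 = n + 1 from by omega, pow_succ]
    field_simp
  have hIntOn : IntegrableOn (fun b : ℝ => |b| ^ (n - 1) • ∫ x, f (b • x) ∂ μ a)
      {b : ℝ | b ≠ 0} volume :=
    (hWint.integrableOn).congr_fun (fun b hb => (hWeq b hb).symm) hsetm
  refine ⟨hIntOn, ?_⟩
  have hres : (volume : Measure ℝ).restrict {s : ℝ | s ≠ 0} = volume := by
    have h1 : {s : ℝ | s ≠ 0} = ({0} : Set ℝ)ᶜ := rfl
    rw [h1, Measure.restrict_congr_set (ae_eq_univ.2 (by simp)), Measure.restrict_univ]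
  set P : Set ℝ := {s : ℝ | 0 < a * s} with hP_def
  have hPm : MeasurableSet P :=
    (isOpen_lt continuous_const (continuous_const.mul continuous_id)).measurableSet
  -- the left-hand side
  have hL1 : (∫ v, f v) = ∫ s : ℝ, Fe s := by
    rw [hGL f hf hfc hfq]
    have h2 : ∫ s in {s:ℝ|s≠0}, (∫ v, f v ∂ μ s) = ∫ s in {s:ℝ|s≠0}, Fe s := by
      apply setIntegral_congr_fun hsetm
      intro s hs
      show (∫ v, f v ∂ μ s) = Fe s
      rw [hFe_eq s hs]
    rw [h2, hres]
  have hL2 : ∫ s : ℝ, Fe s = ∫ s in P, Fe s := by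
    rw [← integral_indicator hPm]
    apply integral_congr_ae
    have h0 : ∀ᵐ s : ℝ, s ≠ 0 := by
      rw [MeasureTheory.ae_iff]
      simp only [ne_eq, not_not]
      simp [show {s : ℝ | s = 0} = {(0:ℝ)} from by ext s; simp]
    refine h0.mono (fun s hs => ?_)
    by_cases hsP : s ∈ P
    · rw [Set.indicator_of_mem hsP]
    · rw [Set.indicator_of_notMem hsP, hFe_eq s hs, hvanish s hs hsP]
  -- change of variables on each half line
  have hderiv : ∀ s : Set ℝ, ∀ x ∈ s, HasDerivWithinAt (fun b : ℝ => a * b^2) (2*a*x) s x := by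
    intro s x _
    have h := ((hasDerivAt_pow 2 x).const_mul a).hasDerivWithinAt (s := s)
    have e : (2*a*x) = a * (((2:ℕ):ℝ) * x^(2-1)) := by norm_num; ring
    rw [e]; exact h
  have himg1 : (fun b : ℝ => a * b^2) '' (Set.Ioi 0) = P := by
    apply Set.eq_of_subset_of_subset
    · rintro s ⟨b, hb, rfl⟩
      have hb0 : b ≠ 0 := ne_of_gt (Set.mem_Ioi.mp hb)
      show 0 < a * (a * b^2)
      rw [show a * (a * b^2) = (a*b)^2 from by ring]
      have : a * b ≠ 0 := mul_ne_zero ha hb0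
      positivity
    · intro s hs
      have hs' : 0 < a * s := hs
      have hsa : 0 < s / a := by
        rcases mul_pos_iff.1 hs' with ⟨h1, h2⟩ | ⟨h1, h2⟩
        · exact div_pos h2 h1
        · exact div_pos_of_neg_of_neg h2 h1
      refine ⟨Real.sqrt (s / a), Set.mem_Ioi.2 (Real.sqrt_pos.2 hsa), ?_⟩
      show a * (Real.sqrt (s / a))^2 = s
      rw [Real.sq_sqrt hsa.le, mul_div_cancel₀ _ ha]
  have himg2 : (fun b : ℝ => a * b^2) '' (Set.Iio 0) = P := by
    apply Set.eq_of_subset_of_subset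
    · rintro s ⟨b, hb, rfl⟩
      have hb0 : b ≠ 0 := ne_of_lt (Set.mem_Iio.mp hb)
      show 0 < a * (a * b^2)
      rw [show a * (a * b^2) = (a*b)^2 from by ring]
      have : a * b ≠ 0 := mul_ne_zero ha hb0
      positivity
    · intro s hs
      have hs' : 0 < a * s := hs
      have hsa : 0 < s / a := by
        rcases mul_pos_iff.1 hs' with ⟨h1, h2⟩ | ⟨h1, h2⟩
        · exact div_pos h2 h1
        · exact div_pos_of_neg_of_neg h2 h1
      refine ⟨-Real.sqrt (s / a), Set.mem_Iio.2 (by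
        simpa using Real.sqrt_pos.2 hsa), ?_⟩
      show a * (-Real.sqrt (s / a))^2 = s
      rw [neg_sq, Real.sq_sqrt hsa.le, mul_div_cancel₀ _ ha]
  have hinj1 : Set.InjOn (fun b : ℝ => a * b^2) (Set.Ioi 0) := by
    intro x hx y hy hxy
    simp only at hxy
    have h1 : x^2 = y^2 := mul_left_cancel₀ ha hxy
    have hx' : 0 < x := Set.mem_Ioi.mp hx
    have hy' : 0 < y := Set.mem_Ioi.mp hy
    nlinarith
  have hinj2 : Set.InjOn (fun b : ℝ => a * b^2) (Set.Iio 0) := by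
    intro x hx y hy hxy
    simp only at hxy
    have h1 : x^2 = y^2 := mul_left_cancel₀ ha hxy
    have hx' : x < 0 := Set.mem_Iio.mp hx
    have hy' : y < 0 := Set.mem_Iio.mp hy
    nlinarith
  have hcov1 : ∫ s in P, Fe s = ∫ b in Set.Ioi (0:ℝ), |2*a*b| • Fe (a*b^2) := by
    rw [← himg1]
    exact integral_image_eq_integral_abs_deriv_smul measurableSet_Ioi (hderiv _) hinj1 Fe
  have hcov2 : ∫ s in P, Fe s = ∫ b in Set.Iio (0:ℝ), |2*a*b| • Fe (a*b^2) := by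
    rw [← himg2]
    exact integral_image_eq_integral_abs_deriv_smul measurableSet_Iio (hderiv _) hinj2 Fe
  -- rewrite both in terms of W
  have habsW : ∀ b : ℝ, |2*a*b| • Fe (a*b^2) = (2*|a|) • W b := by
    intro b
    have h1 : |2*a*b| = (2*|a|) * |b| := by
      rw [abs_mul, abs_mul, abs_two]
    rw [h1, mul_smul]
  have hW1 : ∫ b in Set.Ioi (0:ℝ), W b = (2*|a|)⁻¹ • ∫ s in P, Fe s := by
    rw [hcov1, show (∫ b in Set.Ioi (0:ℝ), |2*a*b| • Fe (a*b^2))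
        = (2*|a|) • ∫ b in Set.Ioi (0:ℝ), W b from by
      rw [← integral_smul]
      exact setIntegral_congr_fun measurableSet_Ioi (fun b _ => habsW b)]
    rw [smul_smul, inv_mul_cancel₀ (by positivity), one_smul]
  have hW2 : ∫ b in Set.Iio (0:ℝ), W b = (2*|a|)⁻¹ • ∫ s in P, Fe s := by
    rw [hcov2, show (∫ b in Set.Iio (0:ℝ), |2*a*b| • Fe (a*b^2))
        = (2*|a|) • ∫ b in Set.Iio (0:ℝ), W b from by
      rw [← integral_smul]
      exact setIntegral_congr_fun measurableSet_Iio (fun b _ => habsW b)]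
    rw [smul_smul, inv_mul_cancel₀ (by positivity), one_smul]
  -- assemble the right-hand side
  have hgoal1 : ∫ b in {b:ℝ|b≠0}, |b| ^ (n - 1) • (∫ x, f (b • x) ∂ μ a)
      = ∫ b in {b:ℝ|b≠0}, W b :=
    setIntegral_congr_fun hsetm (fun b hb => hWeq b hb)
  have hsplit : ∫ b in {b:ℝ|b≠0}, W b = (∫ b in Set.Iio (0:ℝ), W b) + ∫ b in Set.Ioi (0:ℝ), W b := by
    rw [show {b:ℝ|b≠0} = Set.Iio (0:ℝ) ∪ Set.Ioi (0:ℝ) from by rw [Set.Iio_union_Ioi]; rfl]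
    exact setIntegral_union ((Set.Iic_disjoint_Ioi le_rfl).mono_left Set.Iio_subset_Iic_self)
      measurableSet_Ioi hWint.integrableOn hWint.integrableOn
  rw [hgoal1, hsplit, hW1, hW2, hL1, hL2]
  rw [← add_smul, smul_smul]
  rw [show (1/2 * |2*a|) * ((2*|a|)⁻¹ + (2*|a|)⁻¹) = 1 from by
    rw [abs_mul, abs_two]
    field_simp
    ring]
  rw [one_smul]
end

section
/- (i) Ψ is rapidly decreasing as |a| → ∞: for every k ∈ ℕ there exists C_k > 0 such that |Ψ(a)| ≤ C_k·|a|^{−k} for all a with |a| ≥ 1. (ii) There exists C > 0 such that |Ψ(a)| ≤ C·|a|^{−1} for all a with 0 < |a| ≤ 1. (This is the Lemma in §12.12 of the paper, in the archimedean case over ℚ where the lattice k ⊂ 𝔸 is replaced by ℤ ⊂ ℝ; the bound near 0 is proved by Poisson summation.) -/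
open MeasureTheory Filter

private lemma schwartz_bound (φ : SchwartzMap ℝ ℂ) (k : ℕ) :
    ∃ C : ℝ, 0 < C ∧ ∀ x : ℝ, ‖x‖ ^ k * ‖φ x‖ ≤ C := by
  obtain ⟨C, h0, h⟩ := φ.decay k 0
  exact ⟨C, h0, fun x => by simpa using h x⟩

private lemma abs_int_cast (m : ℤ) : |(m:ℝ)| = (m.natAbs : ℝ) := by
  rw [← Int.cast_abs, Int.abs_eq_natAbs, Int.cast_natCast]

/-- Lemma in §12.12 of the paper, archimedean case over ℚ: for a
Schwartz function `φ : ℝ → ℂ` and `Ψ(a) = ∑_{m ∈ ℤ, m ≠ 0} φ(a·m)`: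
(i) `Ψ` is rapidly decreasing as `|a| → ∞`;
(ii) there is `C > 0` with `|Ψ(a)| ≤ C·|a|⁻¹` for `0 < |a| ≤ 1`. -/
theorem stmt9 (φ : SchwartzMap ℝ ℂ) (Ψ : ℝ → ℂ)
    (hΨ : ∀ a : ℝ, Ψ a = ∑' m : ℤ, if m = 0 then 0 else φ (a * (m : ℝ))) :
    (∀ k : ℕ, ∃ C : ℝ, 0 < C ∧ ∀ a : ℝ, 1 ≤ |a| → ‖Ψ a‖ ≤ C * |a| ^ (-(k : ℤ))) ∧
    (∃ C : ℝ, 0 < C ∧ ∀ a : ℝ, 0 < |a| → |a| ≤ 1 → ‖Ψ a‖ ≤ C * |a|⁻¹) := by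
  constructor
  · -- part (i)
    intro k
    obtain ⟨Ck, hCk0, hCk⟩ := schwartz_bound φ (k + 2)
    have hS : Summable (fun m : ℤ => 1 / (m:ℝ) ^ 2) :=
      Real.summable_one_div_int_pow.mpr one_lt_two
    set S := ∑' m : ℤ, 1 / (m:ℝ) ^ 2 with hSdef
    have hS0 : 0 ≤ S := tsum_nonneg fun m => by positivity
    refine ⟨Ck * (S + 1), by positivity, fun a ha => ?_⟩
    have ha0 : (0:ℝ) < |a| := lt_of_lt_of_le one_pos ha
    have hz : (0:ℝ) < |a| ^ (-(k:ℤ)) := zpow_pos ha0 _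
    set f : ℤ → ℂ := fun m => if m = 0 then 0 else φ (a * (m:ℝ)) with hf
    have hpt : ∀ m : ℤ, ‖f m‖ ≤ Ck * |a| ^ (-(k:ℤ)) * (1 / (m:ℝ) ^ 2) := by
      intro m
      by_cases hm : m = 0
      · simp [hf, hm]
      · have hM : (1:ℝ) ≤ |(m:ℝ)| := by
          rw [abs_int_cast]
          exact_mod_cast Int.natAbs_pos.mpr hm
        set M := |(m:ℝ)| with hMdef
        set p := ‖φ (a * (m:ℝ))‖ with hp
        have hp0 : (0:ℝ) ≤ p := norm_nonneg _
        have hkey : (|a| * M) ^ (k+2) * p ≤ Ck := by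
          have := hCk (a * (m:ℝ))
          simpa [Real.norm_eq_abs, abs_mul] using this
        have hmono : |a| ^ k * M ^ 2 ≤ (|a| * M) ^ (k+2) := by
          rw [mul_pow]
          exact mul_le_mul (pow_le_pow_right₀ ha (by omega))
            (pow_le_pow_right₀ hM (by omega)) (by positivity) (by positivity)
        have hle : p * (|a| ^ k * M ^ 2) ≤ Ck := by
          calc p * (|a| ^ k * M ^ 2) ≤ p * (|a| * M) ^ (k+2) :=
                mul_le_mul_of_nonneg_left hmono hp0
            _ = (|a| * M) ^ (k+2) * p := mul_comm _ _
            _ ≤ Ck := hkey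
        have hposd : (0:ℝ) < |a| ^ k * M ^ 2 := by positivity
        have hM2 : (m:ℝ) ^ 2 = M ^ 2 := (sq_abs _).symm
        have hfm : ‖f m‖ = p := by simp [hf, hm, hp]
        rw [hfm, hM2, zpow_neg, zpow_natCast]
        have heq : Ck * (|a| ^ k)⁻¹ * (1 / M ^ 2) = Ck / (|a| ^ k * M ^ 2) := by
          field_simp
        rw [heq, le_div_iff₀ hposd]
        exact hle
    have hb : Summable (fun m : ℤ => Ck * |a| ^ (-(k:ℤ)) * (1 / (m:ℝ) ^ 2)) :=
      hS.mul_left _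
    have hsumf : Summable (fun m : ℤ => ‖f m‖) :=
      Summable.of_nonneg_of_le (fun _ => norm_nonneg _) hpt hb
    calc ‖Ψ a‖ = ‖∑' m : ℤ, f m‖ := by rw [hΨ a]
      _ ≤ ∑' m : ℤ, ‖f m‖ := norm_tsum_le_tsum_norm hsumf
      _ ≤ ∑' m : ℤ, Ck * |a| ^ (-(k:ℤ)) * (1 / (m:ℝ) ^ 2) := Summable.tsum_le_tsum hpt hsumf hb
      _ = Ck * |a| ^ (-(k:ℤ)) * S := by rw [tsum_mul_left]
      _ ≤ Ck * (S + 1) * |a| ^ (-(k:ℤ)) := by nlinarith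
  · -- part (ii)
    obtain ⟨C0, hC00, hC0⟩ := schwartz_bound φ 0
    obtain ⟨C2, hC20, hC2⟩ := schwartz_bound φ 2
    set C := max C0 C2 with hCdef
    have hC0C : C0 ≤ C := le_max_left _ _
    have hC2C : C2 ≤ C := le_max_right _ _
    have hCpos : 0 < C := lt_of_lt_of_le hC00 hC0C
    refine ⟨8 * C, by positivity, fun a ha0 ha1 => ?_⟩
    set t := |a| with htdef
    have ht : 0 < t := ha0
    set u : ℕ → ℝ := fun n => 1 / (1 + t * n) with hu
    have hden : ∀ n : ℕ, (0:ℝ) < 1 + t * n := fun n => by positivity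
    have hanti : ∀ n : ℕ, 0 ≤ u n - u (n+1) := by
      intro n
      have : u (n+1) ≤ u n := by
        apply one_div_le_one_div_of_le (hden n)
        push_cast; nlinarith
      linarith
    have hulim : Tendsto u atTop (nhds 0) := by
      have h : Tendsto (fun n : ℕ => 1 + t * (n:ℝ)) atTop atTop :=
        tendsto_atTop_add_const_left _ 1 (tendsto_natCast_atTop_atTop.const_mul_atTop ht)
      have h2 := h.inv_tendsto_atTop
      simp only [hu, one_div]
      exact h2
    have hT : HasSum (fun n : ℕ => u n - u (n+1)) (u 0) := by
      rw [hasSum_iff_tendsto_nat_of_nonneg hanti]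
      simp only [Finset.sum_range_sub' u]
      simpa using tendsto_const_nhds.sub hulim
    set D := 4 * C / t with hD
    set B : ℤ → ℝ := fun m => if m = 0 then 0 else D * (u (m.natAbs - 1) - u m.natAbs)
      with hB
    have hBpos : (fun n : ℕ => B ((n:ℤ) + 1)) = fun n => D * (u n - u (n+1)) := by
      funext n
      have h1 : ((n:ℤ) + 1) ≠ 0 := by omega
      have h2 : ((n:ℤ) + 1).natAbs = n + 1 := by omega
      simp only [hB, if_neg h1, h2, Nat.add_sub_cancel]
    have hBneg : (fun n : ℕ => B (-((n:ℤ) + 1))) = fun n => D * (u n - u (n+1)) := by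
      funext n
      have h1 : (-((n:ℤ) + 1)) ≠ 0 := by omega
      have h2 : (-((n:ℤ) + 1)).natAbs = n + 1 := by omega
      simp only [hB, if_neg h1, h2, Nat.add_sub_cancel]
    have hBsum : HasSum B (D * u 0 + 0 + D * u 0) := by
      have hpos : HasSum (fun n : ℕ => B ((n:ℤ) + 1)) (D * u 0) := by
        rw [hBpos]; exact hT.mul_left D
      have hneg : HasSum (fun n : ℕ => B (-((n:ℤ) + 1))) (D * u 0) := by
        rw [hBneg]; exact hT.mul_left D
      have h := HasSum.of_add_one_of_neg_add_one hpos hneg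
      simpa [hB] using h
    set f : ℤ → ℂ := fun m => if m = 0 then 0 else φ (a * (m:ℝ)) with hf
    have hpt : ∀ m : ℤ, ‖f m‖ ≤ B m := by
      intro m
      by_cases hm : m = 0
      · simp [hf, hB, hm]
      · set n := m.natAbs with hn
        have hn1 : 1 ≤ n := Int.natAbs_pos.mpr hm
        have hnr : (1:ℝ) ≤ (n:ℝ) := by exact_mod_cast hn1
        have hmr : |(m:ℝ)| = (n:ℝ) := abs_int_cast m
        set p := ‖φ (a * (m:ℝ))‖ with hp
        have hp0 : (0:ℝ) ≤ p := norm_nonneg _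
        have h0 : p ≤ C := by
          have := hC0 (a * (m:ℝ))
          rw [pow_zero, one_mul] at this; linarith
        have h2 : (t * n) ^ 2 * p ≤ C := by
          have := hC2 (a * (m:ℝ))
          rw [Real.norm_eq_abs, abs_mul, hmr] at this
          linarith
        have hd1 : (0:ℝ) < 1 + t * ((n:ℝ) - 1) := by nlinarith
        have hd2 : (0:ℝ) < 1 + t * (n:ℝ) := by nlinarith
        have key : p * ((1 + t * ((n:ℝ) - 1)) * (1 + t * (n:ℝ))) ≤ 4 * C := by
          nlinarith [mul_nonneg (sq_nonneg (1 - t * (n:ℝ))) hp0,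
            mul_nonneg (mul_nonneg hp0 ht.le) hd2.le]
        have hucast : ((n - 1 : ℕ) : ℝ) = (n:ℝ) - 1 := by
          have := Nat.cast_sub hn1 (R := ℝ); simpa using this
        have huval : u (n - 1) - u n = t / ((1 + t * ((n:ℝ) - 1)) * (1 + t * (n:ℝ))) := by
          simp only [hu, hucast]
          field_simp
          ring
        have hfm : ‖f m‖ = p := by simp [hf, hm, hp]
        have hBm : B m = D * (u (n - 1) - u n) := by simp [hB, hm, hn]
        rw [hfm, hBm, huval, hD]
        have heq : 4 * C / t * (t / ((1 + t * ((n:ℝ) - 1)) * (1 + t * (n:ℝ))))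
            = 4 * C / ((1 + t * ((n:ℝ) - 1)) * (1 + t * (n:ℝ))) := by
          field_simp
        rw [heq, le_div_iff₀ (by positivity)]
        linarith [key]
    have hsumf : Summable (fun m : ℤ => ‖f m‖) :=
      Summable.of_nonneg_of_le (fun _ => norm_nonneg _) hpt hBsum.summable
    have hu0 : u 0 = 1 := by simp [hu]
    calc ‖Ψ a‖ = ‖∑' m : ℤ, f m‖ := by rw [hΨ a]
      _ ≤ ∑' m : ℤ, ‖f m‖ := norm_tsum_le_tsum_norm hsumf
      _ ≤ ∑' m : ℤ, B m := Summable.tsum_le_tsum hpt hsumf hBsum.summable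
      _ = D * u 0 + 0 + D * u 0 := hBsum.tsum_eq
      _ = 8 * C * t⁻¹ := by rw [hu0, hD]; field_simp; ring
end
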